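/- Let m, g be positive integers, μ a partition with at most m parts, each part at most g, T ∈ K(μ,m), and S = Ψ_{m,g}(T). Then for every 1 ≤ i ≤ m the partition outside(S^{(i)}) is the rectangular complement of the shape of T^{(i)} inside the rectangle with i rows and g columns (rotated by 180°): the length of its j-th column equals i minus the length of the (g−j)-th column of T^{(i)}. In particular outside(S) = μ̂, so Ψ_{m,g}(T) ∈ SSOT_g(μ̂,m). -/

import Mathlib

open scoped Classical

namespace KingSSOT

/-! ### Partitions -/

def zeroP : ℕ → ℕ := fun _ => 0

/-- `p` is a partition: weakly decreasing row lengths, eventually zero. -/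
def IsPartition (p : ℕ → ℕ) : Prop :=
  (∀ i, p (i + 1) ≤ p i) ∧ ∃ N, p N = 0

/-- number of boxes of a partition -/
noncomputable def psize (p : ℕ → ℕ) : ℕ :=
  sSup (Set.range fun N => ∑ i ∈ Finset.range N, p i)

/-- length of the `j`-th column (columns indexed starting at 1) -/
noncomputable def colLen (p : ℕ → ℕ) (j : ℕ) : ℕ := sInf {r | p r < j}

/-! ### Oscillating horizontal strips -/

/-- apply one step of a row sequence: a positive entry `r` adds a box in (1-indexed) row `r`,
a negative entry `-r` removes a box from row `r`. -/
def applyStep (p : ℕ → ℕ) (r : ℤ) : ℕ → ℕ := fun k =>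
  if (k : ℤ) + 1 = r then p k + 1 else if (k : ℤ) + 1 = -r then p k - 1 else p k

/-- the sequence of partitions of an oscillating horizontal strip with given inside
and row sequence -/
def partsOf (p0 : ℕ → ℕ) (rows : List ℤ) : List (ℕ → ℕ) := rows.scanl applyStep p0

def outsideOf (p0 : ℕ → ℕ) (rows : List ℤ) : ℕ → ℕ := rows.foldl applyStep p0

/-- the maximal partition `S_*` of an oscillating horizontal strip -/
def starOf (p0 : ℕ → ℕ) (rows : List ℤ) : ℕ → ℕ :=
  (rows.filter fun z => decide (0 < z)).foldl applyStep p0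

/-- `q` is obtained from `p` by adding one box in (0-indexed) row `i` -/
def AddBox (p q : ℕ → ℕ) (i : ℕ) : Prop := q i = p i + 1 ∧ ∀ k, k ≠ i → q k = p k

def StepOK (p : ℕ → ℕ) (r : ℤ) : Prop :=
  (∃ i : ℕ, r = (i : ℤ) + 1 ∧ AddBox p (applyStep p r) i) ∨
  (∃ i : ℕ, r = -((i : ℤ) + 1) ∧ AddBox (applyStep p r) p i)

/-- `(p0, rows)` encodes an oscillating horizontal strip: all intermediate shapes are
partitions, all steps genuinely add/remove one box, and the row numbers are weakly
decreasing. -/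
def IsOHS (p0 : ℕ → ℕ) (rows : List ℤ) : Prop :=
  IsPartition p0 ∧ List.Chain' (· ≥ ·) rows ∧
  (∀ q ∈ partsOf p0 rows, IsPartition q) ∧
  ∀ k, k < rows.length → StepOK ((partsOf p0 rows).getD k zeroP) (rows.getD k 0)

/-- a list of partitions forms an oscillating horizontal strip -/
def IsOHSspan (l : List (ℕ → ℕ)) : Prop :=
  ∃ rows : List ℤ, IsOHS (l.headD zeroP) rows ∧ partsOf (l.headD zeroP) rows = l

/-! ### (Skew) semistandard oscillating tableaux -/

/-- data of a (skew) semistandard oscillating tableau: for each `i`, the inside partition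
and the row sequence of the `(i+1)`-st oscillating horizontal strip `T^{(i+1)}`. -/
structure SSOT where
  ins : ℕ → ℕ → ℕ
  rows : ℕ → List ℤ

def IsSSOT (T : SSOT) : Prop :=
  (∀ i, IsOHS (T.ins i) (T.rows i)) ∧
  (∀ i, T.ins (i + 1) = outsideOf (T.ins i) (T.rows i)) ∧
  ∃ N, ∀ i, N ≤ i → T.rows i = []

def OutsideIs (T : SSOT) (ν : ℕ → ℕ) : Prop := ∃ N, ∀ i, N ≤ i → T.ins i = ν

/-- every partition occurring in `T` has at most `g` columns, i.e. `c(T) ≤ g` -/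
def cBound (g : ℕ) (T : SSOT) : Prop :=
  ∀ i, ∀ q ∈ partsOf (T.ins i) (T.rows i), q 0 ≤ g

def wtOf (T : SSOT) : ℕ → ℕ := fun i => (T.rows i).length

/-- membership in `SSOT_g(ν, m)` with inside `lam` (`lam = zeroP` for honest SSOT) -/
def SSOTmem (g m : ℕ) (lam ν : ℕ → ℕ) (T : SSOT) : Prop :=
  IsSSOT T ∧ T.ins 0 = lam ∧ OutsideIs T ν ∧ (∀ i, m ≤ i → T.rows i = []) ∧ cBound g T

/-- the crystal weight `(g - α_1, …, g - α_m)` of an element of `SSOT_g(ν,m)` -/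
def cwt (g : ℕ) (T : SSOT) : ℕ → ℤ := fun i => (g : ℤ) - (T.rows i).length

/-- complement `μ̂` of `μ` in the `m × g` rectangle: `μ̂_i = g - μ_{m+1-i}` -/
def hatP (m g : ℕ) (μ : ℕ → ℕ) : ℕ → ℕ := fun i => if i < m then g - μ (m - 1 - i) else 0

/-! ### King tableaux -/

/-- A King tableau of shape `μ` for `Sp(2m)`.  The alphabet `1 < 1̄ < 2 < 2̄ < ⋯ < m < m̄`
is encoded by `i ↦ 2i-1`, `ī ↦ 2i`.  Rows and columns are 0-indexed. -/
structure King (m : ℕ) (μ : ℕ → ℕ) where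
  entry : ℕ → ℕ → ℕ
  rowsWeak : ∀ r c, c + 1 < μ r → entry r c ≤ entry r (c + 1)
  colsStrict : ∀ r c, c < μ (r + 1) → entry r c < entry (r + 1) c
  symplectic : ∀ r c, c < μ r → 2 * r + 1 ≤ entry r c
  upperBound : ∀ r c, c < μ r → entry r c ≤ 2 * m
  zeroOutside : ∀ r c, ¬ c < μ r → entry r c = 0

/-- `T` has an entry with value `v` somewhere in (0-indexed) column `c` -/
def hasEntry {m : ℕ} {μ : ℕ → ℕ} (T : King m μ) (c v : ℕ) : Prop :=
  ∃ r, c < μ r ∧ T.entry r c = v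

def countEntry (m g : ℕ) {μ : ℕ → ℕ} (T : King m μ) (v : ℕ) : ℕ :=
  ((Finset.range m ×ˢ Finset.range g).filter
    (fun rc => rc.2 < μ rc.1 ∧ T.entry rc.1 rc.2 = v)).card

/-- the crystal weight of a King tableau: `α_i = #(i) - #(ī)` (here `i` is 0-indexed). -/
def kingWt (m g : ℕ) {μ : ℕ → ℕ} (T : King m μ) : ℕ → ℤ :=
  fun i => (countEntry m g T (2 * i + 1) : ℤ) - countEntry m g T (2 * i + 2)

/-- The defining property of King's bijection `Ψ_{m,g}`: for each `i < m` (the strip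
`T^{(i+1)}` of `S`), the horizontal strip `S_*/inside` has no box in (1-indexed) column `j`
iff the letter `i+1` occurs in (0-indexed) column `g-j` of the King tableau, and
`S_*/outside` has a box in column `j` iff the letter `\overline{i+1}` occurs in column
`g-j`; moreover all partitions of the strips fit in `g` columns. -/
def PsiRel (m g : ℕ) {μ : ℕ → ℕ} (T : King m μ) (S : SSOT) : Prop :=
  ∀ i, i < m →
    (starOf (S.ins i) (S.rows i)) 0 ≤ g ∧
    ∀ j, 1 ≤ j → j ≤ g →
      ((colLen (starOf (S.ins i) (S.rows i)) j = colLen (S.ins i) j) ↔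
        hasEntry T (g - j) (2 * i + 1)) ∧
      ((colLen (starOf (S.ins i) (S.rows i)) j
          = colLen (outsideOf (S.ins i) (S.rows i)) j + 1) ↔
        hasEntry T (g - j) (2 * i + 2))



/-! ### Semistandard Young tableaux as lists of rows, Schensted insertion -/

/-- Schensted row insertion (row bumping) of a letter into a tableau:
bump the first entry strictly larger than the inserted letter. -/
def rowInsert : List (List ℕ) → ℕ → List (List ℕ)
  | [], a => [[a]]
  | r :: rest, a =>
    match r.findIdx? (fun x => decide (a < x)) with
    | none => (r ++ [a]) :: rest
    | some k => r.set k a :: rowInsert rest (r.getD k 0)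

def shapeOf (Q : List (List ℕ)) : ℕ → ℕ := fun r => (Q.getD r []).length

def sizeT (Q : List (List ℕ)) : ℕ := Q.flatten.length

/-- add the entry `x` at the end of (0-indexed) row `r` -/
def placeAt (Q : List (List ℕ)) (r x : ℕ) : List (List ℕ) :=
  if r < Q.length then Q.set r ((Q.getD r []) ++ [x]) else Q ++ [[x]]

def maxEntry (Q : List (List ℕ)) : ℕ := Q.flatten.foldr max 0

/-- remove the rightmost cell containing `x` (for `x` the largest entry of `Q`,
this is the last cell of the topmost row containing `x`). -/
def removeRM (x : ℕ) (Q : List (List ℕ)) : List (List ℕ) :=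
  let r := Q.findIdx (fun row => row.contains x)
  (Q.set r ((Q.getD r []).dropLast)).filter (fun row => !row.isEmpty)

/-- repeatedly (k times) remove the rightmost cell containing the current largest entry -/
def stripK : ℕ → List (List ℕ) → List (List ℕ)
  | 0, Q => Q
  | k + 1, Q => stripK k (removeRM (maxEntry Q) Q)

def getCol (Q : List (List ℕ)) (j : ℕ) : List ℕ := Q.filterMap (fun r => r[j]?)

def transposeT (Q : List (List ℕ)) : List (List ℕ) :=
  (List.range (Q.headD []).length).map (getCol Q)

/-- auxiliary "weak" row bumping (bump the first entry `≥ a`), used to define column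
insertion via transposition. -/
def rowInsertW : List (List ℕ) → ℕ → List (List ℕ)
  | [], a => [[a]]
  | r :: rest, a =>
    match r.findIdx? (fun x => decide (a ≤ x)) with
    | none => (r ++ [a]) :: rest
    | some k => r.set k a :: rowInsertW rest (r.getD k 0)

/-- Schensted column insertion of a letter into a semistandard tableau -/
def colInsert (Q : List (List ℕ)) (a : ℕ) : List (List ℕ) :=
  transposeT (rowInsertW (transposeT Q) a)

def IsSSYT (Q : List (List ℕ)) : Prop :=
  (∀ row ∈ Q, row ≠ [] ∧ List.Chain' (· ≤ ·) row) ∧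
  List.Chain' (· ≥ ·) (Q.map List.length) ∧
  (∀ r c, c < (Q.getD (r + 1) []).length →
    (Q.getD r []).getD c 0 < (Q.getD (r + 1) []).getD c 0)

/-! ### Matrices, two-line arrays, and column RSK -/

/-- the two-line array `w_M` of a matrix (`1`-indexed entries, support in `[1,n]²`):
top entries weakly increasing, bottom entries weakly decreasing within a fixed top entry. -/
def twoLine (M : ℕ → ℕ → ℕ) (n : ℕ) : List (ℕ × ℕ) :=
  (List.range n).flatMap fun i =>
    ((List.range n).reverse).flatMap fun j =>
      List.replicate (M (i + 1) (j + 1)) (i + 1, j + 1)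

/-- the `P`-tableau of column RSK: column-insert the bottom row of `w_M` -/
def PM (M : ℕ → ℕ → ℕ) (n : ℕ) : List (List ℕ) :=
  (twoLine M n).foldl (fun Q c => colInsert Q c.2) []

def trM (M : ℕ → ℕ → ℕ) : ℕ → ℕ → ℕ := fun p q => M q p

/-- the `Q`-tableau of column RSK: `Q(M) = P(Mᵀ)` -/
def Qm (M : ℕ → ℕ → ℕ) (n : ℕ) : List (List ℕ) := PM (trM M) n

def rowSumM (M : ℕ → ℕ → ℕ) (n i : ℕ) : ℕ := ∑ j ∈ Finset.range n, M i (j + 1)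

def suppIn (M : ℕ → ℕ → ℕ) (n : ℕ) : Prop :=
  ∀ p q, M p q ≠ 0 → 1 ≤ p ∧ p ≤ n ∧ 1 ≤ q ∧ q ≤ n

/-- membership in `M̂_m^g`: symmetric, even diagonal, `c(M) ≤ 2g` -/
def MhatMem (m g : ℕ) (M : ℕ → ℕ → ℕ) : Prop :=
  suppIn M m ∧ (∀ p q, M p q = M q p) ∧ (∀ p, 2 ∣ M p p) ∧
  ((PM M m).headD []).length ≤ 2 * g

/-! ### type-A crystal operators on tableaux -/

/-- row reading word with cell positions: rows top to bottom, right to left in each row -/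
def cellsOf (Q : List (List ℕ)) : List (ℕ × ℕ × ℕ) :=
  ((List.range Q.length).zip Q).flatMap fun p =>
    (((List.range p.2.length).zip p.2).reverse).map fun q => (p.1, q.1, q.2)

/-- bracketing for letters `i, i+1` along the reading word.  Returns the positions of
unpaired letters `i+1` (chronological order) and the stack of unpaired `i`'s
(most recent first). -/
def pairState (i : ℕ) (cs : List (ℕ × ℕ × ℕ)) : List (ℕ × ℕ) × List (ℕ × ℕ) :=
  cs.foldl
    (fun st c =>
      if c.2.2 = i then (st.1, (c.1, c.2.1) :: st.2)
      else if c.2.2 = i + 1 then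
        match st.2 with
        | [] => (st.1 ++ [(c.1, c.2.1)], st.2)
        | _ :: t => (st.1, t)
      else st)
    ([], [])

def setCell (Q : List (List ℕ)) (r c v : ℕ) : List (List ℕ) :=
  Q.set r ((Q.getD r []).set c v)

/-- crystal operator `e_i` on semistandard tableaux: change the last unpaired `i+1` to `i` -/
def eT (i : ℕ) (Q : List (List ℕ)) : Option (List (List ℕ)) :=
  match (pairState i (cellsOf Q)).1.getLast? with
  | none => none
  | some rc => some (setCell Q rc.1 rc.2 i)

/-- crystal operator `f_i` on semistandard tableaux: change the first unpaired `i` to `i+1` -/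
def fT (i : ℕ) (Q : List (List ℕ)) : Option (List (List ℕ)) :=
  match (pairState i (cellsOf Q)).2.getLast? with
  | none => none
  | some rc => some (setCell Q rc.1 rc.2 (i + 1))

/-! ### operators `e_i^Q`, `e_i^P` on matrices -/

/-- bottom entries of the columns of `w_M` with top entry `i`, in weakly decreasing order -/
def rowListM (M : ℕ → ℕ → ℕ) (n i : ℕ) : List ℕ :=
  ((List.range n).reverse).flatMap fun j => List.replicate (M i (j + 1)) (j + 1)

/-- remove the first element `< q` from a weakly decreasing list (i.e. the largest one) -/
def removeLtNat (q : ℕ) : List ℕ → Option (List ℕ)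
  | [] => none
  | p :: t => if p < q then some t else (removeLtNat q t).map (p :: ·)

/-- pairing `(p, q)`, `p < q`, between the (decreasingly sorted) bottom entries of rows
`i` and `i+1`; returns (unpaired elements of `A`, unpaired elements of `B`),
both in decreasing order. -/
def pairRows (A B : List ℕ) : List ℕ × List ℕ :=
  B.foldl
    (fun st q =>
      match removeLtNat q st.1 with
      | some A' => (A', st.2)
      | none => (st.1, st.2 ++ [q]))
    (A, [])

def updM (M : ℕ → ℕ → ℕ) (a b v : ℕ) : ℕ → ℕ → ℕ :=
  fun p q => if p = a ∧ q = b then v else M p q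

/-- `e_i^Q`: replace the unpaired column `(i+1; b)` of `w_M` with largest `b` by `(i; b)` -/
def eQmat (M : ℕ → ℕ → ℕ) (n i : ℕ) : Option (ℕ → ℕ → ℕ) :=
  match (pairRows (rowListM M n i) (rowListM M n (i + 1))).2.head? with
  | none => none
  | some b => some (updM (updM M (i + 1) b (M (i + 1) b - 1)) i b (M i b + 1))

/-- `f_i^Q`: replace the unpaired column `(i; a)` of `w_M` with smallest `a` by `(i+1; a)` -/
def fQmat (M : ℕ → ℕ → ℕ) (n i : ℕ) : Option (ℕ → ℕ → ℕ) :=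
  match (pairRows (rowListM M n i) (rowListM M n (i + 1))).1.getLast? with
  | none => none
  | some a => some (updM (updM M i a (M i a - 1)) (i + 1) a (M (i + 1) a + 1))

def ePmat (M : ℕ → ℕ → ℕ) (n i : ℕ) : Option (ℕ → ℕ → ℕ) :=
  (eQmat (trM M) n i).map trM

def fPmat (M : ℕ → ℕ → ℕ) (n i : ℕ) : Option (ℕ → ℕ → ℕ) :=
  (fQmat (trM M) n i).map trM

/-- `ẽ_i = e_i^P ∘ e_i^Q` on matrices -/
def etM (M : ℕ → ℕ → ℕ) (n i : ℕ) : Option (ℕ → ℕ → ℕ) :=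
  (eQmat M n i).bind fun M' => ePmat M' n i

/-- `f̃_i = f_i^P ∘ f_i^Q` on matrices -/
def ftM (M : ℕ → ℕ → ℕ) (n i : ℕ) : Option (ℕ → ℕ → ℕ) :=
  (fQmat M n i).bind fun M' => fPmat M' n i


/-! ### Φ and local operators -/


/-- standardization: concatenate the partition sequences of the strips of `T`
(up to strip `N`), dropping repeated endpoints -/
def stdConcat (T : SSOT) (N : ℕ) : List (ℕ → ℕ) :=
  partsOf (T.ins 0) (T.rows 0) ++
    (List.range N).flatMap fun k => (partsOf (T.ins (k + 1)) (T.rows (k + 1))).tail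

/-- `β_i = α_1 + ⋯ + α_i` for `α = wt(T)` -/
def betaT (T : SSOT) (i : ℕ) : ℕ := ∑ k ∈ Finset.range i, (T.rows k).length

/-- the semistandardization value of the index `p ∈ [1, m']`:
the `i` with `β_{i-1} < p ≤ β_i` -/
noncomputable def vOf (T : SSOT) (p : ℕ) : ℕ := sInf {i | p ≤ betaT T i}

/-- the recording data of the reverse row-insertion procedure along the standardization
`lams`: `V p` are the recording tableaux, and `inv` records the involution pairs. -/
def PhiRec (lams : List (ℕ → ℕ)) (V : ℕ → List (List ℕ)) (inv : ℕ → ℕ) : Prop :=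
  V 0 = [] ∧
  ∀ p, p < lams.length - 1 →
    (∃ r, AddBox (lams.getD p zeroP) (lams.getD (p + 1) zeroP) r ∧
      V (p + 1) = placeAt (V p) r (p + 1)) ∨
    (∃ r j, AddBox (lams.getD (p + 1) zeroP) (lams.getD p zeroP) r ∧
      shapeOf (V (p + 1)) = lams.getD (p + 1) zeroP ∧
      rowInsert (V (p + 1)) j = V p ∧ inv (p + 1) = j ∧ inv j = p + 1)

/-- the graph of the map `Φ`: `M` is the semistandardization (with respect to `wt T`) of
the fixed-point-free involution `inv` produced by the reverse row-insertion recording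
procedure on the standardization of `T`. -/
def PhiRel (T : SSOT) (M : ℕ → ℕ → ℕ) : Prop :=
  ∃ (N : ℕ) (V : ℕ → List (List ℕ)) (inv : ℕ → ℕ),
    (∀ i, N ≤ i → T.rows i = []) ∧
    PhiRec (stdConcat T N) V inv ∧
    ∀ a b, M a b =
      ((Finset.Icc 1 ((stdConcat T N).length - 1)).filter
        (fun p => vOf T p = a ∧ vOf T (inv p) = b)).card

/-! ### the explicit local crystal operators on SSOT -/

def posM (l : List ℤ) : Multiset ℕ :=
  ↑(l.filterMap fun z => if 0 < z then some z.toNat else none)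

def negM (l : List ℤ) : Multiset ℕ :=
  ↑(l.filterMap fun z => if z < 0 then some (-z).toNat else none)

/-- `A ↑ B = (A \ B) ⊎ ((A ∩ B) + 1)` -/
def upM (A B : Multiset ℕ) : Multiset ℕ := (A - B) + (A ∩ B).map (· + 1)

/-- `A ↓ B = (A \ B) ⊎ ((A ∩ B) - 1)` -/
def downM (A B : Multiset ℕ) : Multiset ℕ := (A - B) + (A ∩ B).map (· - 1)

/-- the multiset `C_i(T) = r⁺(T^{(i)}) ⊎ (- r̄⁻(T^{(i)}))` (paper-indexed `i ≥ 1`) -/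
def Cmul (T : SSOT) (i : ℕ) : Multiset ℤ :=
  (posM (T.rows (i - 1))).map (fun n => (n : ℤ)) +
    (upM (negM (T.rows (i - 1))) (posM (T.rows i))).map (fun n => -(n : ℤ))

/-- the multiset `D_i(T) = r̄⁺(T^{(i+1)}) ⊎ (- r⁻(T^{(i+1)}))` (paper-indexed `i ≥ 1`) -/
def Dmul (T : SSOT) (i : ℕ) : Multiset ℤ :=
  (upM (posM (T.rows i)) (negM (T.rows (i - 1)))).map (fun n => (n : ℤ)) +
    (negM (T.rows i)).map (fun n => -(n : ℤ))

noncomputable def sortDesc (s : Multiset ℤ) : List ℤ := (s.sort (· ≤ ·)).reverse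

def removeLtInt (q : ℤ) : List ℤ → Option (List ℤ)
  | [] => none
  | p :: t => if p < q then some t else (removeLtInt q t).map (p :: ·)

/-- bracketing between `C` and `D` (both sorted decreasingly): pair `p ∈ C` with `q ∈ D`
whenever `p < q`; returns the unpaired elements of `C` and of `D`, decreasingly. -/
def pairZ (A B : List ℤ) : List ℤ × List ℤ :=
  B.foldl
    (fun st q =>
      match removeLtInt q st.1 with
      | some A' => (A', st.2)
      | none => (st.1, st.2 ++ [q]))
    (A, [])

def posZ (s : Multiset ℤ) : Multiset ℕ := (s.filter (fun z => 0 < z)).map Int.toNat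
def negZ (s : Multiset ℤ) : Multiset ℕ := (s.filter (fun z => z < 0)).map (fun z => (-z).toNat)

/-- row sequence of a strip with positive part `rp` and negative part `rm` -/
noncomputable def rowsFrom (rp rm : Multiset ℕ) : List ℤ :=
  ((rp.sort (· ≤ ·)).reverse).map (fun n => (n : ℤ)) ++
    (rm.sort (· ≤ ·)).map (fun n => -(n : ℤ))

/-- rebuild strips `i-1` and `i` (0-indexed) of `T` from new multisets `C`, `D` by
inverting the `↑`-operations -/
noncomputable def rebuild (T : SSOT) (i : ℕ) (C D : Multiset ℤ) : SSOT :=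
  let rows1 := rowsFrom (posZ C) (downM (negZ C) (posZ D))
  let rows2 := rowsFrom (downM (posZ D) (negZ C)) (negZ D)
  ⟨fun j => if j = i then outsideOf (T.ins (i - 1)) rows1 else T.ins j,
   fun j => if j = i - 1 then rows1 else if j = i then rows2 else T.rows j⟩

/-- raw local operator `ẽ_i` (paper-indexed `i ≥ 1`): after bracketing, move the largest
unpaired element of `D_i(T)` into `C_i(T)` -/
noncomputable def eLoc (i : ℕ) (T : SSOT) : Option SSOT :=
  match (pairZ (sortDesc (Cmul T i)) (sortDesc (Dmul T i))).2.head? with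
  | none => none
  | some b => some (rebuild T i (b ::ₘ Cmul T i) ((Dmul T i).erase b))

/-- raw local operator `f̃_i` (paper-indexed `i ≥ 1`): after bracketing, move the smallest
unpaired element of `C_i(T)` into `D_i(T)` -/
noncomputable def fLoc (i : ℕ) (T : SSOT) : Option SSOT :=
  match (pairZ (sortDesc (Cmul T i)) (sortDesc (Dmul T i))).1.getLast? with
  | none => none
  | some a => some (rebuild T i ((Cmul T i).erase a) (a ::ₘ Dmul T i))

/-- raw local operator `ẽ_0`: delete one addition and one removal of a box in row 1
from `T^{(1)}` -/
noncomputable def e0Loc (T : SSOT) : Option SSOT :=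
  if (1 : ℤ) ∈ T.rows 0 ∧ (-1 : ℤ) ∈ T.rows 0 then
    some ⟨T.ins, fun j => if j = 0 then ((T.rows 0).erase 1).erase (-1) else T.rows j⟩
  else none

/-- raw local operator `f̃_0`: append one addition and one removal of a box in row 1
to `T^{(1)}` -/
def f0Loc (T : SSOT) : Option SSOT :=
  some ⟨T.ins, fun j =>
    if j = 0 then
      ((T.rows 0).filter fun z => decide (0 < z)) ++
        (1 :: (-1) :: ((T.rows 0).filter fun z => decide (z < 0)))
    else T.rows j⟩

/-- the local operator `ẽ_i` relative to an ambient set: the result is `0` if it is not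
in the ambient set -/
noncomputable def eStepA (amb : SSOT → Prop) (i : ℕ) (T : SSOT) : Option SSOT :=
  match (if i = 0 then e0Loc T else eLoc i T) with
  | none => none
  | some T' => if amb T' then some T' else none

noncomputable def fStepA (amb : SSOT → Prop) (i : ℕ) (T : SSOT) : Option SSOT :=
  match (if i = 0 then f0Loc T else fLoc i T) with
  | none => none
  | some T' => if amb T' then some T' else none

noncomputable def ePowA (amb : SSOT → Prop) (i : ℕ) : ℕ → SSOT → Option SSOT
  | 0, T => some T
  | k + 1, T => (eStepA amb i T).bind (ePowA amb i k)

noncomputable def fPowA (amb : SSOT → Prop) (i : ℕ) : ℕ → SSOT → Option SSOT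
  | 0, T => some T
  | k + 1, T => (fStepA amb i T).bind (fPowA amb i k)

/-- `ε_i(T) = max {k : ẽ_i^k(T) ≠ 0}` -/
noncomputable def epsA (amb : SSOT → Prop) (i : ℕ) (T : SSOT) : ℕ :=
  sSup {k | (ePowA amb i k T).isSome}

/-- `φ_i(T) = max {k : f̃_i^k(T) ≠ 0}` -/
noncomputable def phiA (amb : SSOT → Prop) (i : ℕ) (T : SSOT) : ℕ :=
  sSup {k | (fPowA amb i k T).isSome}



/-! ### auxiliary lemmas -/

lemma partAntitone {p : ℕ → ℕ} (hp : IsPartition p) : ∀ a b, a ≤ b → p b ≤ p a := by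
  intro a b hab
  induction b, hab using Nat.le_induction with
  | base => exact le_refl _
  | succ n hn ih => exact le_trans (hp.1 n) ih

lemma colLen_spec {p : ℕ → ℕ} (hp : IsPartition p) {j : ℕ} (hj : 1 ≤ j) :
    p (colLen p j) < j ∧ ∀ r, r < colLen p j → j ≤ p r := by
  unfold colLen
  have hne : {r | p r < j}.Nonempty := by
    obtain ⟨N, hN⟩ := hp.2
    exact ⟨N, by simp only [Set.mem_setOf_eq, hN]; omega⟩
  constructor
  · exact Nat.sInf_mem hne
  · intro r hr
    by_contra h
    push_neg at h
    exact absurd (Nat.sInf_le (show r ∈ {r | p r < j} from h)) (by omega)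

lemma colLen_lt_iff {p : ℕ → ℕ} (hp : IsPartition p) {j : ℕ} (hj : 1 ≤ j) (r : ℕ) :
    r < colLen p j ↔ j ≤ p r := by
  obtain ⟨h1, h2⟩ := colLen_spec hp hj
  constructor
  · exact h2 r
  · intro hjr
    by_contra h
    push_neg at h
    exact absurd (le_trans hjr (partAntitone hp _ _ h)) (by omega)

lemma colLen_le_iff {p : ℕ → ℕ} (hp : IsPartition p) {j : ℕ} (hj : 1 ≤ j) (r : ℕ) :
    colLen p j ≤ r ↔ p r < j := by
  constructor
  · intro h
    by_contra hc
    push_neg at hc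
    have := (colLen_lt_iff hp hj r).mpr hc
    omega
  · intro h
    by_contra hc
    push_neg at hc
    have := (colLen_lt_iff hp hj r).mp hc
    omega

lemma colLen_mono {p q : ℕ → ℕ} (h : ∀ a, p a ≤ q a) (hq : IsPartition q) {j : ℕ}
    (hj : 1 ≤ j) : colLen p j ≤ colLen q j := by
  have h1 : q (colLen q j) < j := (colLen_spec hq hj).1
  exact Nat.sInf_le (show colLen q j ∈ {r | p r < j} from by
    simp only [Set.mem_setOf_eq]; exact lt_of_le_of_lt (h _) h1)

lemma colLen_zeroP {j : ℕ} (hj : 1 ≤ j) : colLen zeroP j = 0 := by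
  have : (0 : ℕ) ∈ {r | zeroP r < j} := by simp [zeroP]; omega
  exact Nat.le_antisymm (Nat.sInf_le this) (Nat.zero_le _)

lemma addBox_le {p q : ℕ → ℕ} {i : ℕ} (h : AddBox p q i) : ∀ a, p a ≤ q a := by
  intro a
  by_cases ha : a = i
  · subst ha; rw [h.1]; omega
  · rw [h.2 a ha]

lemma exists_cross (f : ℕ → ℕ) (ℓ j : ℕ) (h0 : f 0 < j) (hl : j ≤ f ℓ) :
    ∃ k, k < ℓ ∧ f k < j ∧ j ≤ f (k + 1) := by
  induction ℓ with
  | zero => omega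
  | succ n ih =>
    by_cases hn : f n < j
    · exact ⟨n, by omega, hn, hl⟩
    · obtain ⟨k, hk1, hk2⟩ := ih (by omega)
      exact ⟨k, by omega, hk2⟩

lemma addChain (P : ℕ → ℕ → ℕ) (R : ℕ → ℕ) (ℓ : ℕ)
    (hstep : ∀ k, k < ℓ → AddBox (P k) (P (k + 1)) (R k))
    (hpartn : ∀ k, k ≤ ℓ → IsPartition (P k))
    (hR : ∀ a b, a ≤ b → b < ℓ → R b ≤ R a)
    {j : ℕ} (hj : 1 ≤ j) :
    colLen (P ℓ) j ≤ colLen (P 0) j + 1 := by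
  have mono : ∀ a b, a ≤ b → b ≤ ℓ → ∀ x, P a x ≤ P b x := by
    intro a b hab hbl x
    induction b, hab using Nat.le_induction with
    | base => exact le_refl _
    | succ n hn ih =>
      exact le_trans (ih (by omega)) (addBox_le (hstep n (by omega)) x)
  set c := colLen (P 0) j with hc
  rw [colLen_le_iff (hpartn ℓ le_rfl) hj]
  by_contra hcon
  push_neg at hcon
  have hPlc : j ≤ P ℓ c := le_trans hcon (partAntitone (hpartn ℓ le_rfl) c (c + 1) (by omega))
  have hP0c : P 0 c < j := (colLen_spec (hpartn 0 (Nat.zero_le _)) hj).1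
  have hP0c1 : P 0 (c + 1) < j :=
    lt_of_le_of_lt (partAntitone (hpartn 0 (Nat.zero_le _)) c (c + 1) (by omega)) hP0c
  obtain ⟨k1, hk1l, hk1a, hk1b⟩ := exists_cross (fun k => P k c) ℓ j hP0c hPlc
  obtain ⟨k2, hk2l, hk2a, hk2b⟩ := exists_cross (fun k => P k (c + 1)) ℓ j hP0c1 hcon
  replace hk1a : P k1 c < j := hk1a
  replace hk1b : j ≤ P (k1 + 1) c := hk1b
  replace hk2a : P k2 (c + 1) < j := hk2a
  replace hk2b : j ≤ P (k2 + 1) (c + 1) := hk2b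
  have hR1 : R k1 = c := by
    by_contra hne
    rw [(hstep k1 hk1l).2 c (fun h => hne h.symm)] at hk1b
    omega
  have hR2 : R k2 = c + 1 := by
    by_contra hne
    rw [(hstep k2 hk2l).2 (c + 1) (fun h => hne h.symm)] at hk2b
    omega
  have hk21 : k2 < k1 := by
    rcases lt_trichotomy k1 k2 with h | h | h
    · have := hR k1 k2 (by omega) hk2l; omega
    · subst h; omega
    · exact h
  have h1 : P (k2 + 1) c ≤ P k1 c := mono (k2 + 1) k1 (by omega) (by omega) c
  have h2 : P (k2 + 1) (c + 1) ≤ P (k2 + 1) c :=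
    partAntitone (hpartn (k2 + 1) (by omega)) c (c + 1) (by omega)
  exact absurd (lt_of_le_of_lt (le_trans hk2b (le_trans h2 h1)) hk1a) (lt_irrefl j)

lemma partsOf_getD (rows : List ℤ) (p : ℕ → ℕ) (k : ℕ) (hk : k ≤ rows.length) :
    (partsOf p rows).getD k zeroP = outsideOf p (rows.take k) := by
  induction rows generalizing p k with
  | nil =>
    simp only [List.length_nil, Nat.le_zero] at hk
    subst hk
    simp [partsOf, outsideOf]
  | cons r t ih =>
    cases k with
    | zero => simp [partsOf, outsideOf]
    | succ k =>
      simp only [partsOf, List.scanl_cons, List.getD_cons_succ] at *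
      simp only [List.take_succ_cons, outsideOf, List.foldl_cons]
      exact ih (applyStep p r) k (by simpa using hk)

lemma outsideOf_take_succ (rows : List ℤ) (p : ℕ → ℕ) (k : ℕ) (hk : k < rows.length) :
    outsideOf p (rows.take (k + 1)) = applyStep (outsideOf p (rows.take k)) (rows.getD k 0) := by
  rw [List.take_succ]
  have : rows[k]? = some rows[k] := List.getElem?_eq_getElem hk
  rw [this]
  simp only [Option.toList_some, outsideOf, List.foldl_append, List.foldl_cons, List.foldl_nil]
  rw [List.getD_eq_getElem rows 0 hk]

lemma partsOf_length (p : ℕ → ℕ) (rows : List ℤ) :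
    (partsOf p rows).length = rows.length + 1 := by
  simp [partsOf, List.length_scanl]

lemma outsideOf_take_mem (rows : List ℤ) (p : ℕ → ℕ) (k : ℕ) (hk : k ≤ rows.length) :
    outsideOf p (rows.take k) ∈ partsOf p rows := by
  rw [← partsOf_getD rows p k hk]
  have h : k < (partsOf p rows).length := by rw [partsOf_length]; omega
  rw [List.getD_eq_getElem _ _ h]
  exact List.getElem_mem h

lemma stripFacts (p0 : ℕ → ℕ) (rows : List ℤ) (h : IsOHS p0 rows) :
    (∀ q ∈ partsOf p0 rows, ∀ a, q a ≤ starOf p0 rows a) ∧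
    IsPartition (outsideOf p0 rows) ∧ IsPartition (starOf p0 rows) ∧
    (∀ a, p0 a ≤ starOf p0 rows a) ∧
    (∀ a, outsideOf p0 rows a ≤ starOf p0 rows a) ∧
    (∀ j, 1 ≤ j →
      colLen p0 j ≤ colLen (starOf p0 rows) j ∧
      colLen (starOf p0 rows) j ≤ colLen p0 j + 1 ∧
      colLen (outsideOf p0 rows) j ≤ colLen (starOf p0 rows) j ∧
      colLen (starOf p0 rows) j ≤ colLen (outsideOf p0 rows) j + 1) := by
  obtain ⟨hp0, hch, hparts, hstep⟩ := h
  set ℓ := rows.length with hℓ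
  set r : ℕ → ℤ := fun k => rows.getD k 0 with hrdef
  set pk : ℕ → ℕ → ℕ := fun k => outsideOf p0 (rows.take k) with hpkdef
  have hpk0 : pk 0 = p0 := rfl
  have hpkstep : ∀ k, k < ℓ → pk (k + 1) = applyStep (pk k) (r k) := fun k hk =>
    outsideOf_take_succ rows p0 k hk
  have hpkmem : ∀ k, k ≤ ℓ → (pk k) ∈ partsOf p0 rows := fun k hk =>
    outsideOf_take_mem rows p0 k hk
  have hpkpart : ∀ k, k ≤ ℓ → IsPartition (pk k) := fun k hk => hparts _ (hpkmem k hk)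
  have hstep' : ∀ k, k < ℓ → StepOK (pk k) (r k) := by
    intro k hk
    have := hstep k hk
    rwa [partsOf_getD rows p0 k (le_of_lt hk)] at this
  have hAdd : ∀ k, k < ℓ → 0 < r k → AddBox (pk k) (pk (k + 1)) ((r k).natAbs - 1) := by
    intro k hk hpos
    rcases hstep' k hk with ⟨i, hri, hAB⟩ | ⟨i, hri, hAB⟩
    · rw [hpkstep k hk]
      have he : (r k).natAbs - 1 = i := by omega
      rw [he]; exact hAB
    · omega
  have hRem : ∀ k, k < ℓ → r k < 0 → AddBox (pk (k + 1)) (pk k) ((r k).natAbs - 1) := by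
    intro k hk hneg
    rcases hstep' k hk with ⟨i, hri, hAB⟩ | ⟨i, hri, hAB⟩
    · omega
    · rw [hpkstep k hk]
      have he : (r k).natAbs - 1 = i := by omega
      rw [he]; exact hAB
  have hne0 : ∀ k, k < ℓ → r k ≠ 0 := by
    intro k hk
    rcases hstep' k hk with ⟨i, hri, _⟩ | ⟨i, hri, _⟩ <;> omega
  have hrmono : ∀ a b, a ≤ b → b < ℓ → r b ≤ r a := by
    intro a b hab hb
    rcases Nat.eq_or_lt_of_le hab with heq | hlt
    · subst heq; exact le_refl _
    · have hpw := (List.isChain_iff_pairwise).mp hch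
      rw [List.pairwise_iff_getElem] at hpw
      have h2 := hpw a b (by omega) (by omega) hlt
      show rows.getD b 0 ≤ rows.getD a 0
      rw [List.getD_eq_getElem rows 0 (show b < rows.length by omega),
        List.getD_eq_getElem rows 0 (show a < rows.length by omega)]
      exact h2
  obtain ⟨t, htl, htiff⟩ : ∃ t, t ≤ ℓ ∧ ∀ k, k < ℓ → (k < t ↔ 0 < r k) := by
    by_cases hex : ∃ k, r k ≤ 0 ∧ k < ℓ
    · obtain ⟨k0, hk01, hk02⟩ := hex
      have hne : {k | r k ≤ 0}.Nonempty := ⟨k0, hk01⟩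
      refine ⟨sInf {k | r k ≤ 0}, le_trans (Nat.sInf_le hk01) (le_of_lt hk02), ?_⟩
      intro k hk
      constructor
      · intro hkt
        have h3 : k ∉ {k | r k ≤ 0} := Nat.notMem_of_lt_sInf hkt
        simp only [Set.mem_setOf_eq] at h3; omega
      · intro hpos
        by_contra hc
        push_neg at hc
        have hmem : r (sInf {k | r k ≤ 0}) ≤ 0 := Nat.sInf_mem hne
        have h4 := hrmono _ k hc hk
        omega
    · push_neg at hex
      refine ⟨ℓ, le_refl _, fun k hk => ?_⟩
      have := hex k
      constructor
      · intro _; omega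
      · intro _; exact hk
  have hneg : ∀ k, t ≤ k → k < ℓ → r k < 0 := by
    intro k h1 h2
    have h3 := htiff k h2
    have h4 := hne0 k h2
    omega
  have hfilter : rows.filter (fun z => decide (0 < z)) = rows.take t := by
    conv_lhs => rw [← List.take_append_drop t rows]
    rw [List.filter_append]
    have h1 : (rows.take t).filter (fun z => decide (0 < z)) = rows.take t := by
      rw [List.filter_eq_self]
      intro a ha
      rw [List.mem_iff_getElem] at ha
      obtain ⟨idx, hidx, rfl⟩ := ha
      have hlt : (rows.take t).length = min t rows.length := List.length_take
      have hidx' : idx < t := by omega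
      rw [List.getElem_take]
      simp only [decide_eq_true_eq]
      have : 0 < r idx := (htiff idx (by omega)).mp hidx'
      rw [hrdef] at this
      simp only at this
      rwa [List.getD_eq_getElem rows 0 (show idx < rows.length by omega)] at this
    have h2 : (rows.drop t).filter (fun z => decide (0 < z)) = [] := by
      rw [List.filter_eq_nil_iff]
      intro a ha
      rw [List.mem_iff_getElem] at ha
      obtain ⟨idx, hidx, rfl⟩ := ha
      have hld : (rows.drop t).length = rows.length - t := List.length_drop
      rw [List.getElem_drop]
      simp only [decide_eq_true_eq, not_lt]
      have : r (t + idx) < 0 := hneg (t + idx) (by omega) (by omega)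
      rw [hrdef] at this
      simp only at this
      rw [List.getD_eq_getElem rows 0 (show t + idx < rows.length by omega)] at this
      omega
    rw [h1, h2, List.append_nil]
  have hstar : starOf p0 rows = pk t := by
    rw [starOf, hfilter]; rfl
  have hout : outsideOf p0 rows = pk ℓ := by
    rw [hpkdef]
    simp only
    rw [hℓ, List.take_length]
  have hup : ∀ a b, a ≤ b → b ≤ t → ∀ x, pk a x ≤ pk b x := by
    intro a b hab hbt x
    induction b, hab using Nat.le_induction with
    | base => exact le_refl _
    | succ n hn ih =>
      refine le_trans (ih (by omega)) ?_
      exact addBox_le (hAdd n (by omega) ((htiff n (by omega)).mp (by omega))) x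
  have hdown : ∀ a b, t ≤ a → a ≤ b → b ≤ ℓ → ∀ x, pk b x ≤ pk a x := by
    intro a b hta hab hbl x
    induction b, hab using Nat.le_induction with
    | base => exact le_refl _
    | succ n hn ih =>
      refine le_trans ?_ (ih (by omega))
      exact addBox_le (hRem n (by omega) (hneg n (by omega) (by omega))) x
  have hqstar : ∀ q ∈ partsOf p0 rows, ∀ a, q a ≤ starOf p0 rows a := by
    intro q hq a
    rw [List.mem_iff_getElem] at hq
    obtain ⟨k, hk, rfl⟩ := hq
    have hk' : k ≤ ℓ := by
      have := partsOf_length p0 rows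
      omega
    have hqk : (partsOf p0 rows)[k] = pk k := by
      rw [← List.getD_eq_getElem _ zeroP hk, partsOf_getD rows p0 k hk']
    rw [hqk, hstar]
    by_cases hkt : k ≤ t
    · exact hup k t hkt (le_refl t) a
    · exact hdown t k (le_refl t) (by omega) hk' a
  have hstarpart : IsPartition (starOf p0 rows) := by rw [hstar]; exact hpkpart t htl
  have houtpart : IsPartition (outsideOf p0 rows) := by rw [hout]; exact hpkpart ℓ (le_refl ℓ)
  refine ⟨hqstar, houtpart, hstarpart, ?_, ?_, ?_⟩
  · intro a
    rw [hstar, ← hpk0]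
    exact hup 0 t (Nat.zero_le t) (le_refl t) a
  · intro a
    rw [hstar, hout]
    exact hdown t ℓ (le_refl t) htl (le_refl ℓ) a
  · intro j hj
    refine ⟨?_, ?_, ?_, ?_⟩
    · refine colLen_mono ?_ hstarpart hj
      intro a
      rw [hstar, ← hpk0]
      exact hup 0 t (Nat.zero_le t) (le_refl t) a
    · rw [hstar, ← hpk0]
      exact addChain pk (fun k => (r k).natAbs - 1) t
        (fun k hk => hAdd k (by omega) ((htiff k (by omega)).mp hk))
        (fun k hk => hpkpart k (by omega))
        (fun a b hab hb => by
          have h1 := hrmono a b hab (by omega)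
          have h3 := (htiff b (by omega)).mp hb
          show (r b).natAbs - 1 ≤ (r a).natAbs - 1
          omega) hj
    · refine colLen_mono ?_ hstarpart hj
      intro a
      rw [hstar, hout]
      exact hdown t ℓ (le_refl t) htl (le_refl ℓ) a
    · rw [hstar, hout]
      have hmain := addChain (fun s => pk (ℓ - s)) (fun s => (r (ℓ - s - 1)).natAbs - 1) (ℓ - t)
        (fun s hs => by
          have h1 := hRem (ℓ - s - 1) (by omega) (hneg (ℓ - s - 1) (by omega) (by omega))
          rw [show ℓ - s - 1 + 1 = ℓ - s from by omega] at h1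
          show AddBox (pk (ℓ - s)) (pk (ℓ - (s + 1))) _
          rw [show ℓ - (s + 1) = ℓ - s - 1 from by omega]
          exact h1)
        (fun k hk => hpkpart (ℓ - k) (by omega))
        (fun a b hab hb => by
          have h1 := hrmono (ℓ - b - 1) (ℓ - a - 1) (by omega) (by omega)
          have h2 := hneg (ℓ - a - 1) (by omega) (by omega)
          have h3 := hneg (ℓ - b - 1) (by omega) (by omega)
          show (r (ℓ - b - 1)).natAbs - 1 ≤ (r (ℓ - a - 1)).natAbs - 1
          omega) hj
      simp only [Nat.sub_zero] at hmain
      rw [show ℓ - (ℓ - t) = t from by omega] at hmain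
      exact hmain

lemma entry_strictCol {m : ℕ} {μ : ℕ → ℕ} (hpart : IsPartition μ) (T : King m μ) :
    ∀ d r1 c, c < μ (r1 + d + 1) → T.entry r1 c < T.entry (r1 + d + 1) c := by
  intro d
  induction d with
  | zero => intro r1 c hc; exact T.colsStrict r1 c hc
  | succ d ih =>
    intro r1 c hc
    have he : r1 + (d + 1) + 1 = (r1 + d + 1) + 1 := by omega
    rw [he] at hc ⊢
    have hc' : c < μ (r1 + d + 1) := lt_of_lt_of_le hc (partAntitone hpart _ _ (by omega))
    exact lt_trans (ih r1 c hc') (T.colsStrict (r1 + d + 1) c hc)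

lemma entry_strictCol' {m : ℕ} {μ : ℕ → ℕ} (hpart : IsPartition μ) (T : King m μ)
    {r1 r2 c : ℕ} (h12 : r1 < r2) (hc : c < μ r2) : T.entry r1 c < T.entry r2 c := by
  obtain ⟨d, rfl⟩ : ∃ d, r2 = r1 + d + 1 := ⟨r2 - r1 - 1, by omega⟩
  exact entry_strictCol hpart T d r1 c hc

lemma card_eq_indicator {m : ℕ} {μ : ℕ → ℕ} (hpart : IsPartition μ)
    (hlen : ∀ i, m ≤ i → μ i = 0) (T : King m μ) (c v : ℕ) :
    ((Finset.range m).filter (fun r => c < μ r ∧ T.entry r c = v)).card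
      = if hasEntry T c v then 1 else 0 := by
  split_ifs with h
  · obtain ⟨r0, hr0, he⟩ := h
    have hr0m : r0 < m := by
      by_contra hc'
      push_neg at hc'
      rw [hlen r0 hc'] at hr0
      omega
    rw [Finset.card_eq_one]
    refine ⟨r0, ?_⟩
    ext r
    simp only [Finset.mem_filter, Finset.mem_range, Finset.mem_singleton]
    constructor
    · rintro ⟨h1, h2, h3⟩
      rcases lt_trichotomy r r0 with hh | hh | hh
      · have := entry_strictCol' hpart T hh hr0; omega
      · exact hh
      · have := entry_strictCol' hpart T hh h2; omega
    · rintro rfl; exact ⟨hr0m, hr0, he⟩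
  · rw [Finset.card_eq_zero, Finset.filter_eq_empty_iff]
    intro r _
    rintro ⟨h1, h2⟩
    exact h ⟨r, h1, h2⟩

lemma cnt_step {m : ℕ} {μ : ℕ → ℕ} (hpart : IsPartition μ)
    (hlen : ∀ i, m ≤ i → μ i = 0) (T : King m μ) (c i : ℕ) :
    ((Finset.range m).filter (fun r => c < μ r ∧ T.entry r c ≤ 2 * (i + 1))).card =
      ((Finset.range m).filter (fun r => c < μ r ∧ T.entry r c ≤ 2 * i)).card
      + (if hasEntry T c (2 * i + 1) then 1 else 0)
      + (if hasEntry T c (2 * i + 2) then 1 else 0) := by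
  rw [← card_eq_indicator hpart hlen T c (2 * i + 1), ← card_eq_indicator hpart hlen T c (2 * i + 2)]
  have hsplit : (Finset.range m).filter (fun r => c < μ r ∧ T.entry r c ≤ 2 * (i + 1)) =
      ((Finset.range m).filter (fun r => c < μ r ∧ T.entry r c ≤ 2 * i) ∪
        (Finset.range m).filter (fun r => c < μ r ∧ T.entry r c = 2 * i + 1)) ∪
        (Finset.range m).filter (fun r => c < μ r ∧ T.entry r c = 2 * i + 2) := by
    ext r
    simp only [Finset.mem_union, Finset.mem_filter, Finset.mem_range]
    omega
  rw [hsplit, Finset.card_union_of_disjoint, Finset.card_union_of_disjoint]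
  · rw [Finset.disjoint_left]
    intro a ha hb
    simp only [Finset.mem_filter, Finset.mem_range] at ha hb
    omega
  · rw [Finset.disjoint_left]
    intro a ha hb
    simp only [Finset.mem_union, Finset.mem_filter, Finset.mem_range] at ha hb
    omega

lemma cnt_le {m : ℕ} {μ : ℕ → ℕ} (T : King m μ) (c i : ℕ) :
    ((Finset.range m).filter (fun r => c < μ r ∧ T.entry r c ≤ 2 * i)).card ≤ i := by
  calc ((Finset.range m).filter (fun r => c < μ r ∧ T.entry r c ≤ 2 * i)).card
      ≤ (Finset.range i).card := by
        apply Finset.card_le_card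
        intro r hr
        simp only [Finset.mem_filter, Finset.mem_range] at hr ⊢
        have := T.symplectic r c hr.2.1
        omega
    _ = i := Finset.card_range i

lemma cnt_zero {m : ℕ} {μ : ℕ → ℕ} (T : King m μ) (c : ℕ) :
    ((Finset.range m).filter (fun r => c < μ r ∧ T.entry r c ≤ 2 * 0)).card = 0 := by
  rw [Finset.card_eq_zero, Finset.filter_eq_empty_iff]
  intro r _
  rintro ⟨h1, h2⟩
  have := T.symplectic r c h1
  omega

lemma colLen_eq_card {p : ℕ → ℕ} (hp : IsPartition p) {j : ℕ} (hj : 1 ≤ j) {n : ℕ}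
    (hn : p n < j) :
    colLen p j = ((Finset.range n).filter (fun r => j ≤ p r)).card := by
  have hc : colLen p j ≤ n := (colLen_le_iff hp hj n).mpr hn
  have heq : (Finset.range n).filter (fun r => j ≤ p r) = Finset.range (colLen p j) := by
    ext r
    simp only [Finset.mem_filter, Finset.mem_range]
    constructor
    · rintro ⟨h1, h2⟩; exact (colLen_lt_iff hp hj r).mpr h2
    · intro h1; exact ⟨by omega, (colLen_lt_iff hp hj r).mp h1⟩
  rw [heq, Finset.card_range]

lemma hatP_part (m g : ℕ) (μ : ℕ → ℕ) (hpart : IsPartition μ) : IsPartition (hatP m g μ) := by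
  constructor
  · intro i
    unfold hatP
    split_ifs with h1 h2
    · have := partAntitone hpart (m - 1 - (i + 1)) (m - 1 - i) (by omega)
      omega
    · omega
    · exact Nat.zero_le _
    · exact Nat.zero_le _
  · exact ⟨m, by unfold hatP; simp⟩

lemma colLen_hatP (m g : ℕ) (μ : ℕ → ℕ) (hpart : IsPartition μ)
    (hcol : ∀ i, μ i ≤ g) {j : ℕ} (hj1 : 1 ≤ j) (hjg : j ≤ g) :
    colLen (hatP m g μ) j + ((Finset.range m).filter (fun r => g - j < μ r)).card = m := by
  rw [colLen_eq_card (hatP_part m g μ hpart) hj1 (n := m) (by unfold hatP; simp; omega)]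
  have h1 : (Finset.range m).filter (fun k => j ≤ hatP m g μ k)
      = (Finset.range m).filter (fun k => μ (m - 1 - k) ≤ g - j) := by
    apply Finset.filter_congr
    intro k hk
    simp only [Finset.mem_range] at hk
    unfold hatP
    rw [if_pos hk]
    have := hcol (m - 1 - k)
    omega
  rw [h1]
  have h2 : ((Finset.range m).filter (fun k => μ (m - 1 - k) ≤ g - j)).card
      = ((Finset.range m).filter (fun r => μ r ≤ g - j)).card := by
    apply Finset.card_nbij' (i := fun k => m - 1 - k) (j := fun k => m - 1 - k)
    · intro a ha
      simp only [Finset.coe_filter, Finset.mem_coe, Set.mem_setOf_eq, Finset.mem_filter, Finset.mem_range] at ha ⊢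
      exact ⟨by omega, ha.2⟩
    · intro a ha
      simp only [Finset.coe_filter, Finset.mem_coe, Set.mem_setOf_eq, Finset.mem_filter, Finset.mem_range] at ha ⊢
      refine ⟨by omega, ?_⟩
      rw [show m - 1 - (m - 1 - a) = a from by omega]
      exact ha.2
    · intro a ha
      simp only [Finset.coe_filter, Finset.mem_coe, Set.mem_setOf_eq, Finset.mem_filter, Finset.mem_range] at ha ⊢
      omega
    · intro a ha
      simp only [Finset.coe_filter, Finset.mem_coe, Set.mem_setOf_eq, Finset.mem_filter, Finset.mem_range] at ha ⊢
      omega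
  rw [h2]
  have h3 : ((Finset.range m).filter (fun r => μ r ≤ g - j)).card
      + ((Finset.range m).filter (fun r => g - j < μ r)).card = m := by
    have h4 : (Finset.range m).filter (fun r => μ r ≤ g - j)
        = (Finset.range m).filter (fun r => ¬ (g - j < μ r)) := by
      apply Finset.filter_congr
      intro x _
      omega
    rw [h4, Nat.add_comm, Finset.card_filter_add_card_filter_not, Finset.card_range]
  omega

/-- for `T ∈ K(μ,m)` and `S = Ψ_{m,g}(T)`, the outside of the `i`-th strip
of `S` is the rotated rectangular complement of the shape of `T^{(i)}` in the `i × g`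
rectangle: its `j`-th column has length `i` minus the length of the `(g-j)`-th column of
`T^{(i)}` (the subtableau of entries `≤ ī`).  In particular `outside(S) = μ̂` and
`Ψ_{m,g}(T) ∈ SSOT_g(μ̂,m)`. -/
theorem psi_lands_in_ssot (m g : ℕ) (hm : 1 ≤ m) (hg : 1 ≤ g) (μ : ℕ → ℕ)
    (hpart : IsPartition μ) (hlen : ∀ i, m ≤ i → μ i = 0) (hcol : ∀ i, μ i ≤ g)
    (T : King m μ) (S : SSOT)
    (hOHS : ∀ i, IsOHS (S.ins i) (S.rows i))
    (hchain : ∀ i, S.ins (i + 1) = outsideOf (S.ins i) (S.rows i))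
    (h0 : S.ins 0 = zeroP)
    (hend : ∀ i, m ≤ i → S.rows i = [])
    (hrel : PsiRel m g T S) :
    (∀ i, 1 ≤ i → i ≤ m → ∀ j, 1 ≤ j → j ≤ g →
      colLen (outsideOf (S.ins (i - 1)) (S.rows (i - 1))) j =
        i - ((Finset.range m).filter
              (fun r => g - j < μ r ∧ T.entry r (g - j) ≤ 2 * i)).card) ∧
    OutsideIs S (hatP m g μ) ∧
    SSOTmem g m zeroP (hatP m g μ) S := by
  have key : ∀ i, i ≤ m → ∀ j, 1 ≤ j → j ≤ g →
      colLen (S.ins i) j +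
        ((Finset.range m).filter
          (fun r => g - j < μ r ∧ T.entry r (g - j) ≤ 2 * i)).card = i := by
    intro i
    induction i with
    | zero =>
      intro _ j hj hjg
      rw [h0, colLen_zeroP hj, cnt_zero T (g - j)]
    | succ i ih =>
      intro him j hj hjg
      have hi : i < m := by omega
      have IH := ih (by omega) j hj hjg
      have hcle := cnt_le T (g - j) i
      obtain ⟨hgbd, hiff⟩ := hrel i hi
      obtain ⟨hiff1, hiff2⟩ := hiff j hj hjg
      obtain ⟨-, -, -, -, -, hcl⟩ := stripFacts (S.ins i) (S.rows i) (hOHS i)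
      obtain ⟨e1, e2, e3, e4⟩ := hcl j hj
      rw [hchain i, cnt_step hpart hlen T (g - j) i]
      by_cases h1 : hasEntry T (g - j) (2 * i + 1) <;>
        by_cases h2 : hasEntry T (g - j) (2 * i + 2)
      · have q1 := hiff1.mpr h1
        have q2 := hiff2.mpr h2
        simp only [if_pos h1, if_pos h2]
        omega
      · have q1 := hiff1.mpr h1
        have q2 : colLen (starOf (S.ins i) (S.rows i)) j
            ≠ colLen (outsideOf (S.ins i) (S.rows i)) j + 1 := fun hq => h2 (hiff2.mp hq)
        simp only [if_pos h1, if_neg h2]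
        omega
      · have q1 : colLen (starOf (S.ins i) (S.rows i)) j
            ≠ colLen (S.ins i) j := fun hq => h1 (hiff1.mp hq)
        have q2 := hiff2.mpr h2
        simp only [if_neg h1, if_pos h2]
        omega
      · have q1 : colLen (starOf (S.ins i) (S.rows i)) j
            ≠ colLen (S.ins i) j := fun hq => h1 (hiff1.mp hq)
        have q2 : colLen (starOf (S.ins i) (S.rows i)) j
            ≠ colLen (outsideOf (S.ins i) (S.rows i)) j + 1 := fun hq => h2 (hiff2.mp hq)
        simp only [if_neg h1, if_neg h2]
        omega
  have part1 : ∀ i, 1 ≤ i → i ≤ m → ∀ j, 1 ≤ j → j ≤ g →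
      colLen (outsideOf (S.ins (i - 1)) (S.rows (i - 1))) j =
        i - ((Finset.range m).filter
              (fun r => g - j < μ r ∧ T.entry r (g - j) ≤ 2 * i)).card := by
    intro i h1i him j hj hjg
    have hc := hchain (i - 1)
    rw [show i - 1 + 1 = i from by omega] at hc
    rw [← hc]
    have := key i him j hj hjg
    omega
  have hsm := stripFacts (S.ins (m - 1)) (S.rows (m - 1)) (hOHS (m - 1))
  have hcm : S.ins m = outsideOf (S.ins (m - 1)) (S.rows (m - 1)) := by
    have := hchain (m - 1)
    rwa [show m - 1 + 1 = m from by omega] at this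
  have hinsmpart : IsPartition (S.ins m) := by rw [hcm]; exact hsm.2.1
  have hinsm0 : S.ins m 0 ≤ g := by
    rw [hcm]
    exact le_trans (hsm.2.2.2.2.1 0) (hrel (m - 1) (by omega)).1
  have hhpart := hatP_part m g μ hpart
  have hhg : hatP m g μ 0 ≤ g := by
    unfold hatP
    split
    · have := hcol (m - 1 - 0); omega
    · omega
  have hcols : ∀ j, 1 ≤ j → j ≤ g → colLen (S.ins m) j = colLen (hatP m g μ) j := by
    intro j hj hjg
    have k1 := key m (le_refl m) j hj hjg
    have k2 := colLen_hatP m g μ hpart hcol hj hjg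
    have hfe : (Finset.range m).filter (fun r => g - j < μ r ∧ T.entry r (g - j) ≤ 2 * m)
        = (Finset.range m).filter (fun r => g - j < μ r) := by
      apply Finset.filter_congr
      intro r _
      constructor
      · rintro ⟨a, -⟩; exact a
      · intro a; exact ⟨a, T.upperBound r (g - j) a⟩
    rw [hfe] at k1
    omega
  have hinsm : S.ins m = hatP m g μ := by
    funext k
    have hbk : S.ins m k ≤ g := le_trans (partAntitone hinsmpart 0 k (Nat.zero_le k)) hinsm0
    have hbk' : hatP m g μ k ≤ g := le_trans (partAntitone hhpart 0 k (Nat.zero_le k)) hhg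
    have hiffk : ∀ j, 1 ≤ j → (j ≤ S.ins m k ↔ j ≤ hatP m g μ k) := by
      intro j hj
      by_cases hjg : j ≤ g
      · rw [← colLen_lt_iff hinsmpart hj k, ← colLen_lt_iff hhpart hj k, hcols j hj hjg]
      · constructor <;> intro hh <;> omega
    apply le_antisymm
    · rcases Nat.eq_zero_or_pos (S.ins m k) with hz | hz
      · omega
      · exact (hiffk (S.ins m k) hz).mp (le_refl _)
    · rcases Nat.eq_zero_or_pos (hatP m g μ k) with hz | hz
      · omega
      · exact (hiffk (hatP m g μ k) hz).mpr (le_refl _)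
  have insConst : ∀ i, m ≤ i → S.ins i = S.ins m := by
    intro i hmi
    induction i, hmi using Nat.le_induction with
    | base => rfl
    | succ n hn ih =>
      rw [hchain n, hend n hn]
      exact ih
  have part2 : OutsideIs S (hatP m g μ) := ⟨m, fun i hi => by rw [insConst i hi, hinsm]⟩
  refine ⟨part1, part2, ⟨hOHS, hchain, m, hend⟩, h0, part2, hend, ?_⟩
  intro i q hq
  by_cases hi : i < m
  · exact le_trans ((stripFacts _ _ (hOHS i)).1 q hq 0) (hrel i hi).1
  · push_neg at hi
    rw [hend i hi] at hq
    have hq' : q = S.ins i := by simpa [partsOf] using hq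
    rw [hq', insConst i hi, hinsm]
    exact hhg


end KingSSOT
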